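/- Let ε > 0, let C₀ ≥ 1, set K = max{1/ε, C₀}, and let n be sufficiently large in terms of K. Let G be a graph on the vertex set V = L ∪ R such that there is an edge of G between any two disjoint vertex sets of size ⌈n/(10K)⌉. Then there exists a set X ⊆ V with |X| ≤ n/(10K) ≤ εn such that for every Y ⊆ L, the induced subgraph G' = G[V ∖ (X ∪ Y)] with m = |V(G')| vertices satisfies: (i) |N_{G'}(U)| ≥ K|U| for every U ⊆ V(G') with |U| ≤ m/(2K), and (ii) there is an edge of G' between any two disjoint sets U, W ⊆ V(G') with |U|, |W| ≥ m/(2K). -/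

import Mathlib

/-- The fixed left part `L` of the partition `V = L ∪ R`, of size `⌊n/2⌋`. -/
def leftSet (n : ℕ) : Finset (Fin n) := Finset.univ.filter fun v => (v : ℕ) < n / 2

lemma leftSet_card (n : ℕ) : (leftSet n).card = n / 2 := by
  classical
  rcases Nat.eq_zero_or_pos n with rfl | hn
  · simp [leftSet]
  · have h : n / 2 < n := Nat.div_lt_self hn (by norm_num)
    have e : leftSet n = Finset.Iio ⟨n/2, h⟩ := by
      ext v
      simp [leftSet, Finset.mem_Iio, Fin.lt_def]
    rw [e, Fin.card_Iio]

set_option maxHeartbeats 1000000 in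
theorem statement_16 (ε : ℝ) (hε : 0 < ε) (C₀ : ℝ) (hC₀ : 1 ≤ C₀)
    (K : ℝ) (hK : K = max (1 / ε) C₀) :
    ∃ N : ℕ, ∀ n : ℕ, N ≤ n → ∀ G : SimpleGraph (Fin n),
      (∀ U W : Finset (Fin n), Disjoint U W →
        U.card = ⌈(n : ℝ) / (10 * K)⌉₊ → W.card = ⌈(n : ℝ) / (10 * K)⌉₊ →
        ∃ u ∈ U, ∃ w ∈ W, G.Adj u w) →
      ∃ X : Finset (Fin n), (X.card : ℝ) ≤ (n : ℝ) / (10 * K) ∧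
        (n : ℝ) / (10 * K) ≤ ε * n ∧
        ∀ Y : Finset (Fin n), Y ⊆ leftSet n →
          ((∀ U : Finset (Fin n), U ⊆ (X ∪ Y)ᶜ →
              (U.card : ℝ) ≤ ((X ∪ Y)ᶜ.card : ℝ) / (2 * K) →
              K * U.card ≤
                (({w : Fin n | w ∈ (X ∪ Y)ᶜ ∧ ∃ u ∈ U, G.Adj u w}).ncard : ℝ)) ∧
            (∀ U W : Finset (Fin n), U ⊆ (X ∪ Y)ᶜ → W ⊆ (X ∪ Y)ᶜ → Disjoint U W →
              ((X ∪ Y)ᶜ.card : ℝ) / (2 * K) ≤ U.card →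
              ((X ∪ Y)ᶜ.card : ℝ) / (2 * K) ≤ W.card →
              ∃ u ∈ U, ∃ w ∈ W, G.Adj u w)) := by
  classical
  have hK1 : (1:ℝ) ≤ K := hK ▸ le_trans hC₀ (le_max_right _ _)
  have hK0 : (0:ℝ) < K := lt_of_lt_of_le one_pos hK1
  have hKε : 1/ε ≤ K := hK ▸ le_max_left _ _
  refine ⟨⌈40*K⌉₊ + ⌈4*K/(K-1)⌉₊, fun n hn G hG => ?_⟩
  set t := ⌈(n : ℝ) / (10 * K)⌉₊ with ht_def
  set R := (leftSet n)ᶜ with hR_def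
  -- basic numeric facts
  have hn40 : 40*K ≤ (n:ℝ) := by
    calc (40*K : ℝ) ≤ (⌈40*K⌉₊ : ℝ) := Nat.le_ceil _
    _ ≤ (n:ℝ) := by exact_mod_cast le_trans (Nat.le_add_right _ _) hn
  have hnR : (0:ℝ) < n := by nlinarith
  have hn0 : 0 < n := by exact_mod_cast hnR
  have ht1 : 1 ≤ t := Nat.ceil_pos.mpr (by positivity)
  have h10 : ((t:ℝ) - 1) * (10*K) ≤ n := by
    have h := Nat.ceil_lt_add_one (show (0:ℝ) ≤ (n:ℝ)/(10*K) by positivity)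
    rw [← ht_def] at h
    rw [← le_div_iff₀ (by positivity)]
    linarith
  have ht1R : (1:ℝ) ≤ t := by exact_mod_cast ht1
  have hRcard : R.card = n - n/2 := by
    rw [hR_def, Finset.card_compl, leftSet_card, Fintype.card_fin]
  have hRcardR : (n:ℝ)/2 ≤ (R.card:ℝ) := by
    rw [hRcard]
    have h1 : ((n/2 : ℕ):ℝ) ≤ (n:ℝ)/2 := Nat.cast_div_le
    have h2 : n/2 ≤ n := Nat.div_le_self n 2
    push_cast [Nat.cast_sub h2]
    linarith
  -- claim 1 : medium sets expand into R
  have claim1 : ∀ S : Finset (Fin n), t ≤ S.card → S.card ≤ 2 * t - 2 →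
      K * S.card ≤ (((R \ S).filter fun w => ∃ u ∈ S, G.Adj u w).card : ℝ) := by
    intro S hSt hS2
    set W := (R \ S).filter (fun w => ¬ ∃ u ∈ S, G.Adj u w) with hW_def
    have hWcard : W.card ≤ t - 1 := by
      by_contra hcon
      have hWt : t ≤ W.card := by omega
      obtain ⟨S', hS'sub, hS'card⟩ := Finset.exists_subset_card_eq hSt
      obtain ⟨W', hW'sub, hW'card⟩ := Finset.exists_subset_card_eq hWt
      have hdisj : Disjoint S' W' := by
        refine Finset.disjoint_left.mpr fun a haS haW => ?_
        have h := hW'sub haW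
        rw [hW_def, Finset.mem_filter, Finset.mem_sdiff] at h
        exact h.1.2 (hS'sub haS)
      obtain ⟨u, hu, w, hw, hadj⟩ := hG S' W' hdisj hS'card hW'card
      have h := hW'sub hw
      rw [hW_def, Finset.mem_filter] at h
      exact h.2 ⟨u, hS'sub hu, hadj⟩
    have hsplit : (((R \ S).filter fun w => ∃ u ∈ S, G.Adj u w).card) + W.card
        = (R \ S).card := Finset.card_filter_add_card_filter_not _
    have hRS : R.card ≤ (R \ S).card + S.card := by
      rw [Finset.card_sdiff_add_card]
      exact Finset.card_le_card Finset.subset_union_left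
    -- cast everything
    have hWR : (W.card : ℝ) ≤ (t:ℝ) - 1 := by
      have : W.card + 1 ≤ t := by omega
      have := (Nat.cast_le (α := ℝ)).mpr this
      push_cast at this; linarith
    have hNlow : (R.card:ℝ) - (S.card:ℝ) - W.card
        ≤ (((R \ S).filter fun w => ∃ u ∈ S, G.Adj u w).card : ℝ) := by
      have h1 := (Nat.cast_le (α := ℝ)).mpr hRS
      have h2 := congrArg (fun x : ℕ => (x:ℝ)) hsplit
      push_cast at h1 h2
      linarith
    have hS2R : (S.card : ℝ) ≤ 2*(t:ℝ) - 2 := by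
      have h2t : S.card + 2 ≤ 2*t := by omega
      have := (Nat.cast_le (α := ℝ)).mpr h2t
      push_cast at this; linarith
    have key : K * S.card + S.card + (t:ℝ) - 1 ≤ (n:ℝ)/2 := by
      nlinarith [mul_le_mul_of_nonneg_left hS2R hK0.le,
        mul_le_mul_of_nonneg_left h10 (by linarith : (0:ℝ) ≤ 2*K+3),
        mul_nonneg (by linarith : (0:ℝ) ≤ K - 1) (le_of_lt hnR)]
    linarith
  -- choose X
  let Fam : Finset (Finset (Fin n)) := Finset.univ.filter fun S =>
    S = ∅ ∨ (S.card ≤ 2*t - 2 ∧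
      ((((R \ S).filter fun w => ∃ u ∈ S, G.Adj u w).card : ℝ) < K * S.card))
  have hFamne : Fam.Nonempty := ⟨∅, by simp [Fam]⟩
  obtain ⟨X, hXFam, hXmax⟩ := Finset.exists_max_image Fam Finset.card hFamne
  have hXprop : X = ∅ ∨ (X.card ≤ 2*t - 2 ∧
      ((((R \ X).filter fun w => ∃ u ∈ X, G.Adj u w).card : ℝ) < K * X.card)) := by
    have := hXFam
    simp only [Fam, Finset.mem_filter, Finset.mem_univ, true_and] at this
    exact this
  have hXle : X.card ≤ t - 1 := by
    by_contra hcon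
    have hXt : t ≤ X.card := by omega
    rcases hXprop with rfl | ⟨h2, h3⟩
    · simp at hXt; omega
    · exact absurd (claim1 X hXt h2) (not_le.mpr h3)
  have hXreal : (X.card : ℝ) ≤ (n:ℝ)/(10*K) := by
    have h1 : (X.card:ℝ) ≤ (t:ℝ) - 1 := by
      have : X.card + 1 ≤ t := by omega
      have := (Nat.cast_le (α := ℝ)).mpr this
      push_cast at this; linarith
    have h2 : (t:ℝ) - 1 ≤ (n:ℝ)/(10*K) := by
      rw [le_div_iff₀ (by positivity)]; exact h10
    linarith
  have hεn : (n:ℝ)/(10*K) ≤ ε*n := by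
    have hεK : 1 ≤ K * ε := (div_le_iff₀ hε).mp hKε
    rw [div_le_iff₀ (by positivity)]
    nlinarith
  refine ⟨X, hXreal, hεn, fun Y hY => ?_⟩
  set comp := (X ∪ Y)ᶜ with hcomp_def
  set m := comp.card with hm_def
  have hYR : ∀ w : Fin n, w ∈ R → w ∉ Y := by
    intro w hw hwY
    rw [hR_def, Finset.mem_compl] at hw
    exact hw (hY hwY)
  have hmnat : n - n/2 + 1 ≤ m + t := by
    have h1 : m = n - (X ∪ Y).card := by
      rw [hm_def, hcomp_def, Finset.card_compl, Fintype.card_fin]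
    have h2 : (X ∪ Y).card ≤ X.card + Y.card := Finset.card_union_le _ _
    have h3 : Y.card ≤ n/2 := by
      have := Finset.card_le_card hY
      rwa [leftSet_card] at this
    have h4 : (X ∪ Y).card ≤ n := by
      have := Finset.card_le_univ (X ∪ Y)
      rwa [Fintype.card_fin] at this
    omega
  have hmR : (n:ℝ)/2 + 1 ≤ (m:ℝ) + t := by
    have h2 : n/2 ≤ n := Nat.div_le_self n 2
    have := (Nat.cast_le (α := ℝ)).mpr hmnat
    push_cast [Nat.cast_sub h2] at this
    have h1 : ((n/2 : ℕ):ℝ) ≤ (n:ℝ)/2 := Nat.cast_div_le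
    linarith
  constructor
  · -- expansion property (i)
    intro U hUsub hUcard
    have hncard : ({w : Fin n | w ∈ comp ∧ ∃ u ∈ U, G.Adj u w}).ncard
        = (comp.filter fun w => ∃ u ∈ U, G.Adj u w).card := by
      rw [← Set.ncard_coe_finset]
      congr 1
      ext w
      simp
    rw [hncard]
    set T := comp.filter (fun w => ∃ u ∈ U, G.Adj u w) with hT_def
    rcases U.eq_empty_or_nonempty with rfl | hUne
    · simp only [Finset.card_empty, Nat.cast_zero, mul_zero]
      positivity
    by_cases hcase : X.card + U.card ≤ 2*t - 2
    · -- small case via maximality of X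
      by_contra hlt
      push_neg at hlt
      have hXU : Disjoint X U := by
        refine Finset.disjoint_left.mpr fun a haX haU => ?_
        have h := hUsub haU
        rw [hcomp_def, Finset.mem_compl] at h
        exact h (Finset.mem_union_left _ haX)
      have hDcard : (X ∪ U).card = X.card + U.card := Finset.card_union_of_disjoint hXU
      have hNRX : ((((R \ X).filter fun w => ∃ u ∈ X, G.Adj u w).card : ℝ)) ≤ K * X.card := by
        rcases hXprop with hXe | ⟨_, h3⟩
        · rw [hXe]; simp
        · exact h3.le
      have hsub : ((R \ (X ∪ U)).filter fun w => ∃ u ∈ X ∪ U, G.Adj u w)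
          ⊆ ((R \ X).filter fun w => ∃ u ∈ X, G.Adj u w) ∪ T := by
        intro w hw
        rw [Finset.mem_filter, Finset.mem_sdiff] at hw
        obtain ⟨⟨hwR, hwD⟩, a, haD, hadj⟩ := hw
        have hwX : w ∉ X := fun h => hwD (Finset.mem_union_left _ h)
        have hwU : w ∉ U := fun h => hwD (Finset.mem_union_right _ h)
        rcases Finset.mem_union.mp haD with haX | haU
        · exact Finset.mem_union_left _
            (Finset.mem_filter.mpr ⟨Finset.mem_sdiff.mpr ⟨hwR, hwX⟩, a, haX, hadj⟩)
        · refine Finset.mem_union_right _ (Finset.mem_filter.mpr ⟨?_, a, haU, hadj⟩)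
          rw [hcomp_def, Finset.mem_compl, Finset.mem_union]
          push_neg
          exact ⟨hwX, hYR w hwR⟩
      have hcard : ((R \ (X ∪ U)).filter fun w => ∃ u ∈ X ∪ U, G.Adj u w).card
          ≤ (((R \ X).filter fun w => ∃ u ∈ X, G.Adj u w).card) + T.card :=
        le_trans (Finset.card_le_card hsub) (Finset.card_union_le _ _)
      have hDFam : (X ∪ U) ∈ Fam := by
        simp only [Fam, Finset.mem_filter, Finset.mem_univ, true_and]
        right
        refine ⟨by omega, ?_⟩
        have hc := (Nat.cast_le (α := ℝ)).mpr hcard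
        push_cast at hc
        rw [hDcard]
        push_cast
        linarith
      have hmax := hXmax _ hDFam
      rw [hDcard] at hmax
      have hU1 : 1 ≤ U.card := hUne.card_pos
      omega
    · -- large case
      push_neg at hcase
      have hUt : t ≤ U.card := by omega
      set Z := (comp \ U).filter (fun w => ¬ ∃ u ∈ U, G.Adj u w) with hZ_def
      set U₀ := U.filter (fun w => ¬ ∃ u ∈ U, G.Adj u w) with hU0_def
      have hZU : Disjoint Z U₀ := by
        refine Finset.disjoint_left.mpr fun a haZ haU => ?_
        rw [hZ_def, Finset.mem_filter, Finset.mem_sdiff] at haZ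
        exact haZ.1.2 (Finset.mem_of_mem_filter _ haU)
      have hunion : Z ∪ U₀ = comp.filter (fun w => ¬ ∃ u ∈ U, G.Adj u w) := by
        ext w
        simp only [hZ_def, hU0_def, Finset.mem_union, Finset.mem_filter, Finset.mem_sdiff]
        constructor
        · rintro (⟨⟨h1, h2⟩, h3⟩ | ⟨h1, h2⟩)
          · exact ⟨h1, h3⟩
          · exact ⟨hUsub h1, h2⟩
        · rintro ⟨h1, h2⟩
          by_cases hw : w ∈ U
          · exact Or.inr ⟨hw, h2⟩
          · exact Or.inl ⟨⟨h1, hw⟩, h2⟩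
      have hsplit : T.card + (Z.card + U₀.card) = m := by
        rw [← Finset.card_union_of_disjoint hZU, hunion, hT_def]
        exact Finset.card_filter_add_card_filter_not _
      have hU0U : U₀.card ≤ U.card := Finset.card_filter_le _ _
      have hZcard : Z.card ≤ t - 1 := by
        by_contra hcon
        have hZt : t ≤ Z.card := by omega
        obtain ⟨U', hU'sub, hU'card⟩ := Finset.exists_subset_card_eq hUt
        obtain ⟨Z', hZ'sub, hZ'card⟩ := Finset.exists_subset_card_eq hZt
        have hdisj : Disjoint U' Z' := by
          refine Finset.disjoint_left.mpr fun a haU haZ => ?_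
          have h := hZ'sub haZ
          rw [hZ_def, Finset.mem_filter, Finset.mem_sdiff] at h
          exact h.1.2 (hU'sub haU)
        obtain ⟨u, hu, z, hz, hadj⟩ := hG U' Z' hdisj hU'card hZ'card
        have h := hZ'sub hz
        rw [hZ_def, Finset.mem_filter] at h
        exact h.2 ⟨u, hU'sub hu, hadj⟩
      have hKUm : K * U.card ≤ (m:ℝ)/2 := by
        have h1 : K * (U.card:ℝ) ≤ K * ((m:ℝ)/(2*K)) :=
          mul_le_mul_of_nonneg_left hUcard hK0.le
        have h2 : K * ((m:ℝ)/(2*K)) = (m:ℝ)/2 := by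
          field_simp
        linarith
      have hTml : (T.card:ℝ) + Z.card + U₀.card = m := by
        have := congrArg (fun x : ℕ => (x:ℝ)) hsplit
        push_cast at this
        linarith
      have hm44 : 4*(t:ℝ) - 4 ≤ (m:ℝ) := by
        nlinarith [mul_nonneg (by linarith : (0:ℝ) ≤ K - 1) (by linarith : (0:ℝ) ≤ (t:ℝ) - 1)]
      by_cases hU0case : U₀.card ≤ t - 1
      · -- Z and U₀ both small
        have hZR : (Z.card:ℝ) ≤ (t:ℝ) - 1 := by
          have h : Z.card + 1 ≤ t := by omega
          have := (Nat.cast_le (α := ℝ)).mpr h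
          push_cast at this; linarith
        have hU0R : (U₀.card:ℝ) ≤ (t:ℝ) - 1 := by
          have h : U₀.card + 1 ≤ t := by omega
          have := (Nat.cast_le (α := ℝ)).mpr h
          push_cast at this; linarith
        linarith
      · -- U₀ big : pool argument
        have hU0t : t ≤ U₀.card := by omega
        have hpool : U.card + Z.card ≤ 2*t - 1 := by
          by_contra hcon
          have h2t : 2*t ≤ U.card + Z.card := by omega
          obtain ⟨B₁, hB₁sub, hB₁card⟩ := Finset.exists_subset_card_eq hU0t
          have hB₁U : B₁ ⊆ U := hB₁sub.trans (Finset.filter_subset _ _)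
          have hUB : (U \ B₁).card = U.card - t := by
            rw [Finset.card_sdiff_of_subset hB₁U, hB₁card]
          have hdisjUZ : Disjoint (U \ B₁) Z := by
            refine Finset.disjoint_left.mpr fun a haU haZ => ?_
            rw [hZ_def, Finset.mem_filter, Finset.mem_sdiff] at haZ
            exact haZ.1.2 (Finset.mem_sdiff.mp haU).1
          have hPcard : t ≤ ((U \ B₁) ∪ Z).card := by
            rw [Finset.card_union_of_disjoint hdisjUZ, hUB]
            omega
          obtain ⟨P', hP'sub, hP'card⟩ := Finset.exists_subset_card_eq hPcard
          have hdisjBP : Disjoint B₁ P' := by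
            refine Finset.disjoint_left.mpr fun a haB haP => ?_
            rcases Finset.mem_union.mp (hP'sub haP) with h | h
            · exact (Finset.mem_sdiff.mp h).2 haB
            · rw [hZ_def, Finset.mem_filter, Finset.mem_sdiff] at h
              exact h.1.2 (hB₁U haB)
          obtain ⟨b, hb, p, hp, hadj⟩ := hG B₁ P' hdisjBP hB₁card hP'card
          have hbU0 := hB₁sub hb
          rw [hU0_def, Finset.mem_filter] at hbU0
          rcases Finset.mem_union.mp (hP'sub hp) with h | h
          · exact hbU0.2 ⟨p, (Finset.mem_sdiff.mp h).1, hadj.symm⟩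
          · rw [hZ_def, Finset.mem_filter] at h
            exact h.2 ⟨b, hbU0.1, hadj⟩
        have hZUc : (Z.card:ℝ) + U₀.card ≤ 2*(t:ℝ) - 1 := by
          have h : Z.card + U₀.card + 1 ≤ 2*t := by omega
          have := (Nat.cast_le (α := ℝ)).mpr h
          push_cast at this; linarith
        by_cases hm42 : 4*(t:ℝ) - 2 ≤ (m:ℝ)
        · linarith
        · push_neg at hm42
          rcases eq_or_lt_of_le hK1 with hKeq | hKgt
          · -- K = 1 : use integrality
            have hKe : K = 1 := hKeq.symm
            subst hKe
            have h2U : 2*U.card ≤ m := by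
              have h : (U.card:ℝ) ≤ (m:ℝ)/2 := by
                norm_num at hUcard
                exact hUcard
              have h2 : ((2*U.card : ℕ):ℝ) ≤ (m:ℝ) := by push_cast; linarith
              exact_mod_cast h2
            have htnat : t ≤ (n+9)/10 := by
              rw [ht_def]
              apply Nat.ceil_le.mpr
              have hcast : (n:ℝ) ≤ 10*(((n+9)/10 : ℕ):ℝ) := by
                have h : n ≤ 10*((n+9)/10) := by omega
                exact_mod_cast h
              rw [div_le_iff₀ (by norm_num)]
              linarith
            have hm43 : 4*t ≤ m + 3 := by
              have h5 : 5*((n+9)/10) ≤ (n - n/2) + 4 := by omega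
              omega
            have hUT : U.card ≤ T.card := by omega
            rw [one_mul]
            exact_mod_cast hUT
          · -- K > 1 : impossible since n is large
            exfalso
            have hBn : 4*K/(K-1) ≤ (n:ℝ) := by
              calc 4*K/(K-1) ≤ (⌈4*K/(K-1)⌉₊:ℝ) := Nat.le_ceil _
              _ ≤ n := by exact_mod_cast le_trans (Nat.le_add_left _ _) hn
            have h4K : 4*K ≤ (n:ℝ)*(K-1) := by
              rw [div_le_iff₀ (by linarith)] at hBn
              linarith
            have h5t : (n:ℝ)/2 + 3 < 5*t := by linarith
            nlinarith [mul_lt_mul_of_pos_left h5t hK0, h10, h4K]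
  · -- joined property (ii)
    intro U W hUsub hWsub hdisj hUc hWc
    have h2Kt : (t:ℝ) * (2*K) ≤ m := by
      nlinarith [mul_le_mul_of_nonneg_left h10 (by linarith : (0:ℝ) ≤ 2*K+1),
        mul_le_mul_of_nonneg_left hn40 (by linarith : (0:ℝ) ≤ 3*K - 1)]
    have htm : (t:ℝ) ≤ (m:ℝ)/(2*K) := by
      rw [le_div_iff₀ (by positivity)]; exact h2Kt
    have htU : t ≤ U.card := by exact_mod_cast le_trans htm hUc
    have htW : t ≤ W.card := by exact_mod_cast le_trans htm hWc
    obtain ⟨U', hU'sub, hU'card⟩ := Finset.exists_subset_card_eq htU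
    obtain ⟨W', hW'sub, hW'card⟩ := Finset.exists_subset_card_eq htW
    obtain ⟨u, hu, w, hw, hadj⟩ := hG U' W' (hdisj.mono hU'sub hW'sub) hU'card hW'card
    exact ⟨u, hU'sub hu, w, hW'sub hw, hadj⟩
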